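/- arXiv:0901.2508 — 2 statements merged into one kernel-verified Lean document; each statement's English description precedes it below -/
import Mathlib

section
/- Let n ≥ 2, let ξ be a unit vector in ℝ^{n+1}, and let c, C be real constants with c² < 1 and C² > 1 − c²; set S = √(C² + c² − 1) > 0. Define w⁺(x) = S + C⟨x,ξ⟩ and ω⁺ = {x ∈ S^n : w⁺(x) > 0}. Then the radial graph {x/w⁺(x) : x ∈ ω⁺} equals the sheet {p ∈ ℝ^{n+1} : ‖p − (2C/(1−c²))·ξ‖ − ‖p‖ = 2S/(1−c²)} of a two-sheeted hyperboloid of revolution with foci at the origin and at (2C/(1−c²))·ξ. -/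
open scoped RealInnerProductSpace

set_option maxHeartbeats 1000000 in
theorem hyperboloid_sheet_plus (n : ℕ) (hn : 2 ≤ n)
    (ξ : EuclideanSpace ℝ (Fin (n + 1))) (hξ : ‖ξ‖ = 1)
    (c C : ℝ) (hc : c ^ 2 < 1) (hC : 1 - c ^ 2 < C ^ 2) :
    0 < Real.sqrt (C ^ 2 + c ^ 2 - 1) ∧
    {p : EuclideanSpace ℝ (Fin (n + 1)) |
        ∃ x ∈ Metric.sphere (0 : EuclideanSpace ℝ (Fin (n + 1))) 1,
          0 < Real.sqrt (C ^ 2 + c ^ 2 - 1) + C * ⟪x, ξ⟫ ∧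
          p = (1 / (Real.sqrt (C ^ 2 + c ^ 2 - 1) + C * ⟪x, ξ⟫)) • x} =
      {p : EuclideanSpace ℝ (Fin (n + 1)) |
        ‖p - (2 * C / (1 - c ^ 2)) • ξ‖ - ‖p‖ =
          2 * Real.sqrt (C ^ 2 + c ^ 2 - 1) / (1 - c ^ 2)} := by
  have hc1 : 0 < 1 - c ^ 2 := by linarith
  set S : ℝ := Real.sqrt (C ^ 2 + c ^ 2 - 1) with hSdef
  have hS2 : S ^ 2 = C ^ 2 + c ^ 2 - 1 := Real.sq_sqrt (by linarith)
  have hSpos : 0 < S := Real.sqrt_pos.mpr (by linarith)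
  refine ⟨hSpos, ?_⟩
  ext p
  simp only [Set.mem_setOf_eq]
  constructor
  · rintro ⟨x, hx, hw, rfl⟩
    rw [Metric.mem_sphere, dist_zero_right] at hx
    set t : ℝ := ⟪x, ξ⟫ with ht
    set w : ℝ := S + C * t with hwdef
    have hnp : ‖(1 / w) • x‖ = 1 / w := by
      rw [norm_smul, hx, mul_one, Real.norm_eq_abs, abs_of_pos (by positivity)]
    have hk : 0 < 2 * S / (1 - c ^ 2) := by positivity
    have hkey : ‖(1 / w) • x - (2 * C / (1 - c ^ 2)) • ξ‖ =
        1 / w + 2 * S / (1 - c ^ 2) := by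
      have hsq : ‖(1 / w) • x - (2 * C / (1 - c ^ 2)) • ξ‖ ^ 2 =
          (1 / w + 2 * S / (1 - c ^ 2)) ^ 2 := by
        rw [norm_sub_sq_real, norm_smul, norm_smul, real_inner_smul_left,
          real_inner_smul_right, hx, hξ, ← ht, mul_one, mul_one,
          Real.norm_eq_abs, Real.norm_eq_abs, sq_abs, sq_abs]
        field_simp
        linear_combination 4*w*(1-c^2) * hwdef - 4*w^2 * hS2
      have h1 : 0 ≤ ‖(1 / w) • x - (2 * C / (1 - c ^ 2)) • ξ‖ := norm_nonneg _
      have h2 : 0 ≤ 1 / w + 2 * S / (1 - c ^ 2) := by positivity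
      nlinarith [hsq, h1, h2]
    rw [hkey, hnp]; ring
  · intro hp
    set a : ℝ := 2 * C / (1 - c ^ 2) with ha
    set k : ℝ := 2 * S / (1 - c ^ 2) with hk
    have hkpos : 0 < k := by positivity
    have hpne : p ≠ 0 := by
      rintro rfl
      rw [zero_sub, norm_neg, norm_smul, hξ, mul_one, norm_zero, sub_zero,
        Real.norm_eq_abs] at hp
      have : a ^ 2 = k ^ 2 := by rw [← sq_abs a, hp]
      rw [ha, hk] at this
      have : C ^ 2 = S ^ 2 := by
        field_simp at this
        nlinarith [this]
      nlinarith [hS2]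
    have hr : 0 < ‖p‖ := norm_pos_iff.mpr hpne
    set r : ℝ := ‖p‖ with hrdef
    have hnorm : ‖p - a • ξ‖ = r + k := by linarith
    have hsq : r ^ 2 - 2 * a * ⟪p, ξ⟫ + a ^ 2 = (r + k) ^ 2 := by
      have := congrArg (· ^ 2) hnorm
      rw [norm_sub_sq_real, real_inner_smul_right, norm_smul, hξ, mul_one,
        Real.norm_eq_abs, sq_abs] at this
      linarith [this]
    set x : EuclideanSpace ℝ (Fin (n + 1)) := r⁻¹ • p with hxdef
    have hxs : x ∈ Metric.sphere (0 : EuclideanSpace ℝ (Fin (n + 1))) 1 := by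
      rw [Metric.mem_sphere, dist_zero_right, hxdef, norm_smul, Real.norm_eq_abs,
        abs_of_pos (inv_pos.mpr hr), inv_mul_cancel₀ (ne_of_gt hr)]
    have hpt : ⟪p, ξ⟫ = r * ⟪x, ξ⟫ := by
      rw [hxdef, real_inner_smul_left]
      field_simp
    set t : ℝ := ⟪x, ξ⟫ with ht
    have hrw : r * (S + C * t) = 1 := by
      rw [hpt] at hsq
      rw [ha, hk] at hsq
      field_simp at hsq
      have hz : (r * (S + C * t) - 1) * (4 * (1 - c ^ 2) ^ 4) = 0 := by
        linear_combination (-(1-c^2)^3 : ℝ) * hsq - 4*(1-c^2)^3 * hS2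
      have h4 : (4 : ℝ) * (1 - c ^ 2) ^ 4 ≠ 0 := by positivity
      have := (mul_eq_zero.mp hz).resolve_right h4
      linarith
    have hwpos : 0 < S + C * t := by
      nlinarith [hrw, hr]
    refine ⟨x, hxs, hwpos, ?_⟩
    have : (1 : ℝ) / (S + C * t) = r := by
      field_simp
      linarith [hrw]
    rw [this, hxdef, smul_smul, mul_inv_cancel₀ (ne_of_gt hr), one_smul]
end

section
/- Let n ≥ 2, let ξ be a unit vector in ℝ^{n+1}, and let c, C be real constants with c² < 1 and C² > 1 − c²; set S = √(C² + c² − 1) > 0. Define w⁻(x) = −S + C⟨x,ξ⟩ and ω⁻ = {x ∈ S^n : w⁻(x) > 0}. Then the radial graph {x/w⁻(x) : x ∈ ω⁻} equals the sheet {p ∈ ℝ^{n+1} : ‖p‖ − ‖p − (2C/(1−c²))·ξ‖ = 2S/(1−c²)} of a two-sheeted hyperboloid of revolution with foci at the origin and at (2C/(1−c²))·ξ. -/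
open scoped RealInnerProductSpace

lemma hyperboloid_aux1 (S C c t : ℝ) (hS2 : S ^ 2 = C ^ 2 + c ^ 2 - 1)
    (hw0 : (-S + C * t) ≠ 0) (hk0 : (1 - c^2 : ℝ) ≠ 0) :
    (1 / (-S + C * t))^2 - 2*(1 / (-S + C * t) * (2*C/(1-c^2) * t)) + (2*C/(1-c^2))^2
      = (1 / (-S + C * t) - 2*S/(1-c^2))^2 := by
  obtain ⟨k, hke⟩ : ∃ k:ℝ, k = 1 - c^2 := ⟨_, rfl⟩
  obtain ⟨w, hwe⟩ : ∃ w:ℝ, w = -S + C*t := ⟨_, rfl⟩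
  rw [← hke, ← hwe]
  have hk' : k ≠ 0 := hke ▸ hk0
  have hw' : w ≠ 0 := hwe ▸ hw0
  field_simp
  subst hke hwe
  linear_combination (-4*(-S+C*t)^2) * hS2

lemma hyperboloid_aux2 (S C c r ip : ℝ) (hS2 : S ^ 2 = C ^ 2 + c ^ 2 - 1)
    (hk0 : (1 - c^2 : ℝ) ≠ 0)
    (h : r^2 - 2*(2*C/(1-c^2) * ip) + (2*C/(1-c^2))^2 = (r - 2*S/(1-c^2))^2) :
    C * ip = S * r + 1 := by
  obtain ⟨k, hke⟩ : ∃ k:ℝ, k = 1 - c^2 := ⟨_, rfl⟩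
  rw [← hke] at h
  have hk' : k ≠ 0 := hke ▸ hk0
  field_simp at h
  refine mul_left_cancel₀ (pow_ne_zero 4 hk') ?_
  subst hke
  linear_combination (-(1-c^2)^3/4:ℝ)*h + (-(1-c^2)^3)*hS2

theorem hyperboloid_sheet_minus (n : ℕ) (hn : 2 ≤ n)
    (ξ : EuclideanSpace ℝ (Fin (n + 1))) (hξ : ‖ξ‖ = 1)
    (c C : ℝ) (hc : c ^ 2 < 1) (hC : 1 - c ^ 2 < C ^ 2) :
    0 < Real.sqrt (C ^ 2 + c ^ 2 - 1) ∧
    {p : EuclideanSpace ℝ (Fin (n + 1)) |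
        ∃ x ∈ Metric.sphere (0 : EuclideanSpace ℝ (Fin (n + 1))) 1,
          0 < -Real.sqrt (C ^ 2 + c ^ 2 - 1) + C * ⟪x, ξ⟫ ∧
          p = (1 / (-Real.sqrt (C ^ 2 + c ^ 2 - 1) + C * ⟪x, ξ⟫)) • x} =
      {p : EuclideanSpace ℝ (Fin (n + 1)) |
        ‖p‖ - ‖p - (2 * C / (1 - c ^ 2)) • ξ‖ =
          2 * Real.sqrt (C ^ 2 + c ^ 2 - 1) / (1 - c ^ 2)} := by
  have hpos : (0:ℝ) < C ^ 2 + c ^ 2 - 1 := by linarith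
  set S := Real.sqrt (C ^ 2 + c ^ 2 - 1) with hSdef
  have hS2 : S ^ 2 = C ^ 2 + c ^ 2 - 1 := Real.sq_sqrt hpos.le
  have hS : 0 < S := Real.sqrt_pos.mpr hpos
  have hk : (0:ℝ) < 1 - c ^ 2 := by linarith
  have hk0 : (1 - c ^ 2 : ℝ) ≠ 0 := ne_of_gt hk
  refine ⟨hS, ?_⟩
  ext p
  simp only [Set.mem_setOf_eq]
  constructor
  · rintro ⟨x, hx, hw, rfl⟩
    rw [mem_sphere_zero_iff_norm] at hx
    set t := ⟪x, ξ⟫ with ht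
    have hw0 : (-S + C * t) ≠ 0 := ne_of_gt hw
    have ht1 : |t| ≤ 1 := by
      calc |t| ≤ ‖x‖ * ‖ξ‖ := abs_real_inner_le_norm x ξ
      _ = 1 := by rw [hx, hξ]; ring
    have hCt : C * t ≤ |C| := by
      calc C * t ≤ |C * t| := le_abs_self _
      _ = |C| * |t| := abs_mul C t
      _ ≤ |C| * 1 := mul_le_mul_of_nonneg_left ht1 (abs_nonneg C)
      _ = |C| := mul_one _
    have hnp : ‖(1 / (-S + C * t)) • x‖ = 1 / (-S + C * t) := by
      rw [norm_smul, hx, mul_one, Real.norm_eq_abs, abs_of_pos (by positivity)]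
    have hnn : 0 ≤ 1 / (-S + C * t) - 2 * S / (1 - c ^ 2) := by
      rw [sub_nonneg, div_le_div_iff₀ hk hw]
      nlinarith [sq_nonneg (|C| - S), sq_abs C]
    have hq2 : ‖(1 / (-S + C * t)) • x - (2 * C / (1 - c ^ 2)) • ξ‖ ^ 2
        = (1 / (-S + C * t) - 2 * S / (1 - c ^ 2)) ^ 2 := by
      rw [norm_sub_sq_real, real_inner_smul_left, real_inner_smul_right, hnp,
        norm_smul, hξ, mul_one, Real.norm_eq_abs, sq_abs, ← ht]
      linear_combination hyperboloid_aux1 S C c t hS2 hw0 hk0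
    have hq : ‖(1 / (-S + C * t)) • x - (2 * C / (1 - c ^ 2)) • ξ‖
        = 1 / (-S + C * t) - 2 * S / (1 - c ^ 2) := by
      have h := congrArg Real.sqrt hq2
      rwa [Real.sqrt_sq (norm_nonneg _), Real.sqrt_sq hnn] at h
    rw [hnp, hq]; ring
  · intro hp
    have hr : 0 < ‖p‖ := by
      have h1 : 0 < 2 * S / (1 - c ^ 2) := by positivity
      have h2 : 0 ≤ ‖p - (2 * C / (1 - c ^ 2)) • ξ‖ := norm_nonneg _
      linarith
    have hq2 : ‖p - (2 * C / (1 - c ^ 2)) • ξ‖ ^ 2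
        = (‖p‖ - 2 * S / (1 - c ^ 2)) ^ 2 := by
      have hq : ‖p - (2 * C / (1 - c ^ 2)) • ξ‖ = ‖p‖ - 2 * S / (1 - c ^ 2) := by
        linarith
      rw [hq]
    rw [norm_sub_sq_real, real_inner_smul_right, norm_smul, hξ, mul_one,
      Real.norm_eq_abs, sq_abs] at hq2
    have key : C * ⟪p, ξ⟫ = S * ‖p‖ + 1 := by
      refine hyperboloid_aux2 S C c ‖p‖ ⟪p, ξ⟫ hS2 hk0 ?_
      linear_combination hq2
    refine ⟨‖p‖⁻¹ • p, ?_, ?_, ?_⟩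
    · rw [mem_sphere_zero_iff_norm, norm_smul, Real.norm_eq_abs,
        abs_of_pos (inv_pos.mpr hr), inv_mul_cancel₀ (ne_of_gt hr)]
    · rw [real_inner_smul_left]
      have h1 : C * (‖p‖⁻¹ * ⟪p, ξ⟫) = ‖p‖⁻¹ * (C * ⟪p, ξ⟫) := by ring
      rw [h1, key]
      have h2 : ‖p‖⁻¹ * (S * ‖p‖ + 1) = S + ‖p‖⁻¹ := by
        field_simp
      rw [h2]
      have h3 : 0 < ‖p‖⁻¹ := inv_pos.mpr hr
      linarith
    · rw [real_inner_smul_left]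
      have h1 : C * (‖p‖⁻¹ * ⟪p, ξ⟫) = ‖p‖⁻¹ * (C * ⟪p, ξ⟫) := by ring
      rw [h1, key]
      have h2 : -S + ‖p‖⁻¹ * (S * ‖p‖ + 1) = ‖p‖⁻¹ := by
        field_simp
        ring
      rw [h2, one_div, inv_inv, smul_smul, mul_inv_cancel₀ (ne_of_gt hr), one_smul]
end
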